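/- Suppose D is a distribution over S^{d-1} × {-1,+1} whose X-marginal is uniform on the unit sphere, and the η-bounded noise condition holds with respect to a unit vector u, i.e., for all x, P[Y ≠ sign(u·x) | X = x] ≤ η with η < 1/2. Then for any unit vector v, err(h_v) - err(h_u) ≥ (1 - 2η)·θ(v, u)/π, where err(h_w) = P[sign(w·X) ≠ Y] and θ(v,u) = arccos(v·u). -/

import Mathlib

open MeasureTheory
open scoped RealInnerProductSpace

noncomputable def rotL {d : ℕ} (w a : EuclideanSpace ℝ (Fin d)) (θ : ℝ) :
    EuclideanSpace ℝ (Fin d) →ₗ[ℝ] EuclideanSpace ℝ (Fin d) where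
  toFun x := x + ((Real.cos θ - 1) * ⟪w, x⟫ - Real.sin θ * ⟪a, x⟫) • w
      + (Real.sin θ * ⟪w, x⟫ + (Real.cos θ - 1) * ⟪a, x⟫) • a
  map_add' x y := by
    simp only [inner_add_right]
    module
  map_smul' r x := by
    simp only [inner_smul_right, RingHom.id_apply]
    module

lemma rotL_apply {d : ℕ} (w a : EuclideanSpace ℝ (Fin d)) (θ : ℝ) (x : EuclideanSpace ℝ (Fin d)) :
    rotL w a θ x = x + ((Real.cos θ - 1) * ⟪w, x⟫ - Real.sin θ * ⟪a, x⟫) • w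
      + (Real.sin θ * ⟪w, x⟫ + (Real.cos θ - 1) * ⟪a, x⟫) • a := rfl

section
variable {d : ℕ} {w a : EuclideanSpace ℝ (Fin d)}
  (hw : ‖w‖ = 1) (ha : ‖a‖ = 1) (hwa : ⟪w, a⟫ = 0)

include hw ha hwa

lemma rotL_inner (θ : ℝ) (x y : EuclideanSpace ℝ (Fin d)) :
    ⟪rotL w a θ x, rotL w a θ y⟫ = ⟪x, y⟫ := by
  have hww : ⟪w, w⟫ = (1:ℝ) := by
    rw [real_inner_self_eq_norm_mul_norm, hw]; norm_num
  have haa : ⟪a, a⟫ = (1:ℝ) := by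
    rw [real_inner_self_eq_norm_mul_norm, ha]; norm_num
  have haw : ⟪a, w⟫ = (0:ℝ) := by rw [real_inner_comm]; exact hwa
  have hpc := Real.sin_sq_add_cos_sq θ
  simp only [rotL_apply, inner_add_left, inner_add_right, real_inner_smul_left,
    real_inner_smul_right, hww, haa, hwa, haw, real_inner_comm]
  linear_combination (⟪w, x⟫ * ⟪w, y⟫ + ⟪a, x⟫ * ⟪a, y⟫) * hpc

noncomputable def rotE (θ : ℝ) :
    EuclideanSpace ℝ (Fin d) ≃ₗᵢ[ℝ] EuclideanSpace ℝ (Fin d) :=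
  ((rotL w a θ).isometryOfInner (rotL_inner hw ha hwa θ)).toLinearIsometryEquiv rfl

lemma rotE_apply (θ : ℝ) (x : EuclideanSpace ℝ (Fin d)) :
    rotE hw ha hwa θ x = rotL w a θ x := rfl

lemma rotE_fix (θ : ℝ) (x : EuclideanSpace ℝ (Fin d)) (h1 : ⟪w, x⟫ = 0) (h2 : ⟪a, x⟫ = 0) :
    rotE hw ha hwa θ x = x := by
  rw [rotE_apply, rotL_apply, h1, h2]
  simp

lemma rotE_w (θ : ℝ) : rotE hw ha hwa θ w = Real.cos θ • w + Real.sin θ • a := by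
  have hww : ⟪w, w⟫ = (1:ℝ) := by
    rw [real_inner_self_eq_norm_mul_norm, hw]; norm_num
  have haw : ⟪a, w⟫ = (0:ℝ) := by rw [real_inner_comm]; exact hwa
  rw [rotE_apply, rotL_apply, hww, haw]
  module

lemma rotE_a (θ : ℝ) : rotE hw ha hwa θ a = -Real.sin θ • w + Real.cos θ • a := by
  have haa : ⟪a, a⟫ = (1:ℝ) := by
    rw [real_inner_self_eq_norm_mul_norm, ha]; norm_num
  rw [rotE_apply, rotL_apply, hwa, haa]
  module

lemma rotE_comb (θ c : ℝ) :
    rotE hw ha hwa θ (Real.cos c • w + Real.sin c • a)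
      = Real.cos (θ + c) • w + Real.sin (θ + c) • a := by
  rw [map_add, _root_.map_smul, _root_.map_smul, rotE_w hw ha hwa, rotE_a hw ha hwa,
    Real.cos_add, Real.sin_add]
  module

end
open MeasureTheory
open scoped RealInnerProductSpace

/-- The uniform (rotation-invariant) probability distribution on the unit sphere. -/
def IsUniformOnSphere {d : ℕ} (μ : Measure (EuclideanSpace ℝ (Fin d))) : Prop :=
  IsProbabilityMeasure μ ∧ μ {x | ‖x‖ = 1}ᶜ = 0 ∧
    ∀ f : EuclideanSpace ℝ (Fin d) ≃ₗᵢ[ℝ] EuclideanSpace ℝ (Fin d),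
      Measure.map (⇑f) μ = μ

section PartB
variable {d : ℕ} {μ : Measure (EuclideanSpace ℝ (Fin d))}

lemma IsUniformOnSphere.null_submodule (hμ : IsUniformOnSphere μ)
    (W : Submodule ℝ (EuclideanSpace ℝ (Fin d))) (hW : W ≠ ⊤) :
    μ (W : Set (EuclideanSpace ℝ (Fin d))) = 0 := by
  haveI : IsProbabilityMeasure μ := hμ.1
  suffices key : ∀ n (W : Submodule ℝ (EuclideanSpace ℝ (Fin d))),
      Module.finrank ℝ W = n → W ≠ ⊤ → μ (W : Set (EuclideanSpace ℝ (Fin d))) = 0 by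
    exact key _ W rfl hW
  intro n
  induction n with
  | zero =>
    intro W hr _
    rw [Submodule.finrank_eq_zero.mp hr, Submodule.bot_coe]
    refine measure_mono_null ?_ hμ.2.1
    intro x hx
    simp only [Set.mem_singleton_iff] at hx
    simp [hx]
  | succ k ih =>
    intro W hr hWtop
    -- pick a unit vector in W
    have hWbot : W ≠ ⊥ := by
      intro h
      rw [h, finrank_bot] at hr; omega
    obtain ⟨w, hw, hwW⟩ : ∃ w : EuclideanSpace ℝ (Fin d), ‖w‖ = 1 ∧ w ∈ W := by
      obtain ⟨w₁, hw₁W, hw₁0⟩ := Submodule.exists_mem_ne_zero_of_ne_bot hWbot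
      refine ⟨‖w₁‖⁻¹ • w₁, ?_, W.smul_mem _ hw₁W⟩
      rw [norm_smul, norm_inv, norm_norm, inv_mul_cancel₀ (norm_ne_zero_iff.mpr hw₁0)]
    have hw0 : w ≠ 0 := by
      intro h; rw [h, norm_zero] at hw; norm_num at hw
    -- pick a unit vector orthogonal to W
    have horth : Wᗮ ≠ ⊥ := by
      rw [Ne, Submodule.orthogonal_eq_bot_iff]; exact hWtop
    obtain ⟨a, ha, haW⟩ : ∃ a : EuclideanSpace ℝ (Fin d), ‖a‖ = 1 ∧ a ∈ Wᗮ := by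
      obtain ⟨a₁, ha₁W, ha₁0⟩ := Submodule.exists_mem_ne_zero_of_ne_bot horth
      refine ⟨‖a₁‖⁻¹ • a₁, ?_, Wᗮ.smul_mem _ ha₁W⟩
      rw [norm_smul, norm_inv, norm_norm, inv_mul_cancel₀ (norm_ne_zero_iff.mpr ha₁0)]
    have hwa : ⟪w, a⟫ = (0:ℝ) := (Submodule.mem_orthogonal W a).mp haW w hwW
    -- the smaller subspace
    set W' := (Submodule.span ℝ {w})ᗮ ⊓ W with hW'def
    have hspanle : Submodule.span ℝ {w} ≤ W := by
      rw [Submodule.span_le, Set.singleton_subset_iff]; exact hwW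
    have hrank' : Module.finrank ℝ W' = k := by
      have h2 := Submodule.finrank_add_inf_finrank_orthogonal (K₁ := Submodule.span ℝ {w})
        (K₂ := W) hspanle
      rw [finrank_span_singleton hw0, hr] at h2
      rw [hW'def]
      omega
    have hW'W : W' ≤ W := inf_le_right
    have hW'top : W' ≠ ⊤ := fun h => hWtop (top_le_iff.mp (h ▸ hW'W))
    have hW'null : μ (W' : Set (EuclideanSpace ℝ (Fin d))) = 0 := ih W' hrank' hW'top
    -- rotations
    set R : ℕ → (EuclideanSpace ℝ (Fin d) ≃ₗᵢ[ℝ] EuclideanSpace ℝ (Fin d)) :=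
      fun n => rotE hw ha hwa (Real.arctan n) with hRdef
    have hWmble : MeasurableSet (W : Set (EuclideanSpace ℝ (Fin d))) :=
      W.closed_of_finiteDimensional.measurableSet
    set S : ℕ → Set (EuclideanSpace ℝ (Fin d)) :=
      fun n => (R n).symm ⁻¹' (W : Set (EuclideanSpace ℝ (Fin d))) with hSdef
    have hSmble : ∀ n, MeasurableSet (S n) := fun n =>
      (W.closed_of_finiteDimensional.preimage (R n).symm.continuous).measurableSet
    have hSμ : ∀ n, μ (S n) = μ (W : Set (EuclideanSpace ℝ (Fin d))) := by
      intro n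
      have hinv := hμ.2.2 (R n).symm
      calc μ (S n) = (Measure.map (⇑(R n).symm) μ) (W : Set (EuclideanSpace ℝ (Fin d))) := by
            rw [Measure.map_apply (R n).symm.continuous.measurable hWmble]
        _ = μ (W : Set (EuclideanSpace ℝ (Fin d))) := by rw [hinv]
    -- key: points in two distinct S n's lie in W'
    have hkey : ∀ n x, x ∈ S n →
        Real.cos (Real.arctan n) * ⟪a, x⟫ = Real.sin (Real.arctan n) * ⟪w, x⟫ := by
      intro n x hx
      have hmem : (R n).symm x ∈ W := hx
      have h0 : ⟪a, (R n).symm x⟫ = (0:ℝ) := by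
        rw [real_inner_comm]
        exact (Submodule.mem_orthogonal W a).mp haW _ hmem
      have h1 : ⟪R n a, x⟫ = (0:ℝ) := by
        calc ⟪R n a, x⟫ = ⟪R n a, R n ((R n).symm x)⟫ := by
              rw [(R n).apply_symm_apply]
          _ = ⟪a, (R n).symm x⟫ := (R n).inner_map_map _ _
          _ = 0 := h0
      rw [hRdef] at h1
      simp only [rotE_a hw ha hwa] at h1
      rw [inner_add_left, real_inner_smul_left, real_inner_smul_left] at h1
      linarith [h1]
    have hcos : ∀ n : ℕ, Real.cos (Real.arctan n) ≠ 0 :=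
      fun n => ne_of_gt (Real.cos_arctan_pos n)
    have hdisj : ∀ m n : ℕ, m ≠ n → S m ∩ S n ⊆ (W' : Set (EuclideanSpace ℝ (Fin d))) := by
      intro m n hmn x hx
      have hm := hkey m x hx.1
      have hn := hkey n x hx.2
      -- derive inner products vanish
      have hsin : ∀ j : ℕ, Real.sin (Real.arctan j) = (j : ℝ) * Real.cos (Real.arctan j) := by
        intro j
        have h := Real.tan_arctan (j : ℝ)
        rw [Real.tan_eq_sin_div_cos, div_eq_iff (hcos j)] at h
        linarith
      have htm : ⟪a, x⟫ = (m : ℝ) * ⟪w, x⟫ := by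
        apply mul_left_cancel₀ (hcos m)
        rw [hm, hsin m]; ring
      have htn : ⟪a, x⟫ = (n : ℝ) * ⟪w, x⟫ := by
        apply mul_left_cancel₀ (hcos n)
        rw [hn, hsin n]; ring
      have hp : ⟪w, x⟫ = (0:ℝ) := by
        by_contra hp0
        have : (m : ℝ) = n := by
          have := htm.symm.trans htn
          exact mul_right_cancel₀ hp0 this
        exact hmn (Nat.cast_injective this)
      have hq : ⟪a, x⟫ = (0:ℝ) := by rw [htm, hp, mul_zero]
      have hfix : R m x = x := rotE_fix hw ha hwa _ x hp hq
      have hsymmfix : (R m).symm x = x := by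
        conv_lhs => rw [← hfix]
        exact (R m).symm_apply_apply x
      constructor
      · exact Submodule.mem_orthogonal_singleton_iff_inner_right.mpr hp
      · have : (R m).symm x ∈ W := hx.1
        rwa [hsymmfix] at this
    -- disjointified sets
    set T : ℕ → Set (EuclideanSpace ℝ (Fin d)) :=
      fun n => S n \ (W' : Set (EuclideanSpace ℝ (Fin d))) with hTdef
    have hTmble : ∀ n, MeasurableSet (T n) :=
      fun n => (hSmble n).diff W'.closed_of_finiteDimensional.measurableSet
    have hTμ : ∀ n, μ (T n) = μ (W : Set (EuclideanSpace ℝ (Fin d))) := by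
      intro n; rw [hTdef]; simp only
      rw [measure_diff_null hW'null, hSμ n]
    have hTdisj : Pairwise (Function.onFun Disjoint T) := by
      intro m n hmn
      rw [Function.onFun, Set.disjoint_left]
      intro x hxm hxn
      exact hxn.2 (hdisj m n hmn ⟨hxm.1, hxn.1⟩)
    by_contra hne
    have htop : μ (⋃ n, T n) = ⊤ := by
      rw [measure_iUnion hTdisj hTmble]
      simp only [hTμ]
      exact ENNReal.tsum_const_eq_top_of_ne_zero hne
    have : μ (⋃ n, T n) ≤ 1 := prob_le_one
    rw [htop] at this
    exact (by norm_num : ¬ ((⊤:ENNReal) ≤ 1)) this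

lemma IsUniformOnSphere.null_perp (hμ : IsUniformOnSphere μ)
    {b : EuclideanSpace ℝ (Fin d)} (hb : b ≠ 0) :
    μ {x | ⟪b, x⟫ = (0:ℝ)} = 0 := by
  have hset : {x : EuclideanSpace ℝ (Fin d) | ⟪b, x⟫ = (0:ℝ)}
      = ((Submodule.span ℝ {b})ᗮ : Set (EuclideanSpace ℝ (Fin d))) := by
    ext x
    simp only [Set.mem_setOf_eq, SetLike.mem_coe,
      Submodule.mem_orthogonal_singleton_iff_inner_right]
  rw [hset]
  refine hμ.null_submodule _ ?_
  intro h
  have : b ∈ (Submodule.span ℝ {b})ᗮ := h ▸ Submodule.mem_top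
  have hbb : ⟪b, b⟫ = (0:ℝ) := Submodule.mem_orthogonal_singleton_iff_inner_right.mp this
  exact hb (inner_self_eq_zero.mp hbb)
end PartB
open MeasureTheory
open scoped RealInnerProductSpace

/-- `sign(t) = +1` if `t ≥ 0` and `-1` otherwise. -/
noncomputable def rsign (t : ℝ) : ℝ := if 0 ≤ t then 1 else -1

lemma rsign_of_nonneg {t : ℝ} (h : 0 ≤ t) : rsign t = 1 := if_pos h
lemma rsign_of_neg {t : ℝ} (h : t < 0) : rsign t = -1 := if_neg (not_le.mpr h)

lemma rsign_ne_iff {s t : ℝ} : rsign s ≠ rsign t ↔ (0 ≤ s ∧ t < 0) ∨ (s < 0 ∧ 0 ≤ t) := by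
  unfold rsign
  by_cases hs : 0 ≤ s <;> by_cases ht : 0 ≤ t <;>
    simp [hs, ht, not_le.mp, le_of_not_ge] <;> norm_num

/-- disagreement region of two homogeneous halfspace classifiers -/
def Dset {d : ℕ} (a b : EuclideanSpace ℝ (Fin d)) : Set (EuclideanSpace ℝ (Fin d)) :=
  {x | rsign ⟪a, x⟫ ≠ rsign ⟪b, x⟫}

lemma Dset_mble {d : ℕ} (a b : EuclideanSpace ℝ (Fin d)) : MeasurableSet (Dset a b) := by
  have h1 : ∀ c : EuclideanSpace ℝ (Fin d),
      MeasurableSet {x : EuclideanSpace ℝ (Fin d) | 0 ≤ ⟪c, x⟫} := by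
    intro c
    exact (isClosed_le continuous_const (continuous_const.inner continuous_id)).measurableSet
  have : Dset a b = ({x : EuclideanSpace ℝ (Fin d) | 0 ≤ ⟪a, x⟫} ∩ {x | 0 ≤ ⟪b, x⟫}ᶜ)
      ∪ ({x : EuclideanSpace ℝ (Fin d) | 0 ≤ ⟪a, x⟫}ᶜ ∩ {x | 0 ≤ ⟪b, x⟫}) := by
    ext x
    simp only [Dset, Set.mem_setOf_eq, Set.mem_union, Set.mem_inter_iff, Set.mem_compl_iff,
      rsign_ne_iff, not_le]
  rw [this]
  exact (((h1 a).inter (h1 b).compl).union ((h1 a).compl.inter (h1 b)))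

lemma Dset_symm {d : ℕ} (a b : EuclideanSpace ℝ (Fin d)) : Dset a b = Dset b a := by
  ext x; simp only [Dset, Set.mem_setOf_eq]; exact ne_comm

lemma Dset_self {d : ℕ} (a : EuclideanSpace ℝ (Fin d)) : Dset a a = ∅ := by
  ext x; simp [Dset]

lemma Dset_neg {d : ℕ} (a : EuclideanSpace ℝ (Fin d)) :
    Dset a (-a) = {x | ⟪a, x⟫ ≠ (0:ℝ)} := by
  ext x
  simp only [Dset, Set.mem_setOf_eq]
  constructor
  · intro hx h0
    apply hx
    rw [inner_neg_left, h0]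
    norm_num
  · intro h0
    rcases lt_or_gt_of_ne h0 with h | h
    · have e1 : rsign ⟪a, x⟫ = -1 := rsign_of_neg h
      have e2 : rsign ⟪-a, x⟫ = 1 := by
        rw [inner_neg_left]; exact rsign_of_nonneg (by linarith)
      rw [e1, e2]; norm_num
    · have e1 : rsign ⟪a, x⟫ = 1 := rsign_of_nonneg h.le
      have e2 : rsign ⟪-a, x⟫ = -1 := by
        rw [inner_neg_left]; exact rsign_of_neg (by linarith)
      rw [e1, e2]; norm_num

lemma wedge_sign {c c' p q : ℝ} (hc : 0 < c) (hc' : 0 < c') (hcc : c + c' ≤ Real.pi)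
    (hp : 0 < p) (h1 : Real.cos c * p + Real.sin c * q < 0) :
    Real.cos (c + c') * p + Real.sin (c + c') * q < 0 := by
  have hsc : 0 < Real.sin c := Real.sin_pos_of_pos_of_lt_pi hc (by linarith)
  have hsc' : 0 < Real.sin c' := Real.sin_pos_of_pos_of_lt_pi hc' (by linarith)
  have hs2 : 0 ≤ Real.sin (c + c') :=
    Real.sin_nonneg_of_nonneg_of_le_pi (by linarith) hcc
  have hid : Real.sin c * Real.cos (c + c') - Real.cos c * Real.sin (c + c')
      = -Real.sin c' := by
    rw [← Real.sin_sub]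
    norm_num
  have hprod : Real.sin (c + c') * (Real.cos c * p + Real.sin c * q) ≤ 0 :=
    mul_nonpos_iff.mpr (Or.inl ⟨hs2, h1.le⟩)
  nlinarith [mul_pos hsc' hp, hsc]

lemma wedge_sign' {c c' p q : ℝ} (hc : 0 < c) (hc' : 0 < c') (hcc : c + c' ≤ Real.pi)
    (hp : p < 0) (h1 : 0 < Real.cos c * p + Real.sin c * q) :
    0 < Real.cos (c + c') * p + Real.sin (c + c') * q := by
  have := wedge_sign (p := -p) (q := -q) hc hc' hcc (by linarith) (by nlinarith)
  nlinarith [this]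
-- (appended after a.lean, b.lean, c1.lean)
open MeasureTheory
open scoped RealInnerProductSpace

lemma Dset_map {d : ℕ} (f : EuclideanSpace ℝ (Fin d) ≃ₗᵢ[ℝ] EuclideanSpace ℝ (Fin d))
    (a b : EuclideanSpace ℝ (Fin d)) : Dset (f a) (f b) = ⇑f.symm ⁻¹' (Dset a b) := by
  ext x
  have h1 : ⟪f a, x⟫ = ⟪a, f.symm x⟫ := by
    conv_lhs => rw [← f.apply_symm_apply x]
    exact f.inner_map_map _ _
  have h2 : ⟪f b, x⟫ = ⟪b, f.symm x⟫ := by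
    conv_lhs => rw [← f.apply_symm_apply x]
    exact f.inner_map_map _ _
  simp only [Dset, Set.mem_preimage, Set.mem_setOf_eq, h1, h2]

lemma Dset_measure_map {d : ℕ} {μ : Measure (EuclideanSpace ℝ (Fin d))}
    (hμ : IsUniformOnSphere μ) (f : EuclideanSpace ℝ (Fin d) ≃ₗᵢ[ℝ] EuclideanSpace ℝ (Fin d))
    (a b : EuclideanSpace ℝ (Fin d)) : μ (Dset (f a) (f b)) = μ (Dset a b) := by
  rw [Dset_map]
  rw [← Measure.map_apply f.symm.continuous.measurable (Dset_mble a b), hμ.2.2 f.symm]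

section PartC

variable {d : ℕ} {μ : Measure (EuclideanSpace ℝ (Fin d))}
  {u e : EuclideanSpace ℝ (Fin d)}

lemma norm_comb (hu : ‖u‖ = 1) (he : ‖e‖ = 1) (hue : ⟪u, e⟫ = 0) (t : ℝ) :
    ‖Real.cos t • u + Real.sin t • e‖ = 1 := by
  have huu : ⟪u, u⟫ = (1:ℝ) := by
    rw [real_inner_self_eq_norm_mul_norm, hu]; norm_num
  have hee : ⟪e, e⟫ = (1:ℝ) := by
    rw [real_inner_self_eq_norm_mul_norm, he]; norm_num
  have heu : ⟪e, u⟫ = (0:ℝ) := by rw [real_inner_comm]; exact hue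
  have hinner : ⟪Real.cos t • u + Real.sin t • e, Real.cos t • u + Real.sin t • e⟫ = (1:ℝ) := by
    simp only [inner_add_left, inner_add_right, real_inner_smul_left, real_inner_smul_right,
      huu, hee, hue, heu]
    nlinarith [Real.sin_sq_add_cos_sq t]
  have hns : ⟪Real.cos t • u + Real.sin t • e, Real.cos t • u + Real.sin t • e⟫
      = ‖Real.cos t • u + Real.sin t • e‖ * ‖Real.cos t • u + Real.sin t • e‖ :=
    real_inner_self_eq_norm_mul_norm _
  rw [hinner] at hns
  nlinarith [norm_nonneg (Real.cos t • u + Real.sin t • e)]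

lemma inner_comb (t : ℝ) (x : EuclideanSpace ℝ (Fin d)) :
    ⟪Real.cos t • u + Real.sin t • e, x⟫
      = Real.cos t * ⟪u, x⟫ + Real.sin t * ⟪e, x⟫ := by
  rw [inner_add_left, real_inner_smul_left, real_inner_smul_left]

lemma wedge_additive (hμ : IsUniformOnSphere μ)
    (hu : ‖u‖ = 1) (he : ‖e‖ = 1) (hue : ⟪u, e⟫ = 0)
    {c c' : ℝ} (hc : 0 < c) (hc' : 0 < c') (hcc : c + c' ≤ Real.pi) :
    μ (Dset u (Real.cos (c + c') • u + Real.sin (c + c') • e))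
      = μ (Dset u (Real.cos c • u + Real.sin c • e))
        + μ (Dset u (Real.cos c' • u + Real.sin c' • e)) := by
  set v1 := Real.cos c • u + Real.sin c • e with hv1
  set v2 := Real.cos (c + c') • u + Real.sin (c + c') • e with hv2
  -- rotate the second wedge
  have hrot : μ (Dset v1 v2) = μ (Dset u (Real.cos c' • u + Real.sin c' • e)) := by
    have hfu : rotE hu he hue c u = v1 := by
      rw [rotE_w hu he hue c]
    have hfv : rotE hu he hue c (Real.cos c' • u + Real.sin c' • e) = v2 := by
      rw [rotE_comb hu he hue c c']
    rw [← hfu, ← hfv, Dset_measure_map hμ]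
  rw [← hrot]
  -- null boundary set
  have hu0 : u ≠ 0 := by intro h; rw [h, norm_zero] at hu; norm_num at hu
  have hv10 : v1 ≠ 0 := by
    intro h
    have := norm_comb hu he hue c
    rw [← hv1, h, norm_zero] at this; norm_num at this
  have hv20 : v2 ≠ 0 := by
    intro h
    have := norm_comb hu he hue (c + c')
    rw [← hv2, h, norm_zero] at this; norm_num at this
  set N : Set (EuclideanSpace ℝ (Fin d)) :=
    {x | ⟪u, x⟫ = (0:ℝ)} ∪ ({x | ⟪v1, x⟫ = (0:ℝ)} ∪ {x | ⟪v2, x⟫ = (0:ℝ)}) with hNdef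
  have hN : μ N = 0 := by
    rw [hNdef]
    refine measure_union_null (hμ.null_perp hu0) (measure_union_null ?_ ?_)
    · exact hμ.null_perp hv10
    · exact hμ.null_perp hv20
  -- the pointwise facts
  have h_inter : Dset u v1 ∩ Dset v1 v2 ⊆ N := by
    intro x ⟨hx1, hx2⟩
    by_contra hxN
    rw [hNdef] at hxN
    simp only [Set.mem_union, Set.mem_setOf_eq] at hxN
    push_neg at hxN
    obtain ⟨hp, hr1, hr2⟩ := hxN
    rw [Dset, Set.mem_setOf_eq, rsign_ne_iff] at hx1 hx2
    have e1 : ⟪v1, x⟫ = Real.cos c * ⟪u, x⟫ + Real.sin c * ⟪e, x⟫ := inner_comb c x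
    have e2 : ⟪v2, x⟫ = Real.cos (c + c') * ⟪u, x⟫ + Real.sin (c + c') * ⟪e, x⟫ :=
      inner_comb (c + c') x
    rcases hx1 with ⟨hp1, hr1n⟩ | ⟨hp1, hr1p⟩
    · -- 0 < p, r1 < 0, so r2 < 0; but hx2 forces 0 ≤ r2
      have hppos : 0 < ⟪u, x⟫ := lt_of_le_of_ne hp1 (Ne.symm hp)
      have hr2n : ⟪v2, x⟫ < 0 := by
        rw [e2]
        rw [e1] at hr1n
        exact wedge_sign hc hc' hcc hppos hr1n
      rcases hx2 with ⟨_, hr2n'⟩ | ⟨hr1n', _⟩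
      · linarith
      · linarith
    · -- p < 0, 0 < r1, so 0 < r2; but hx2 forces r2 < 0 or 0 ≤ ... 
      have hr1pos : 0 < ⟪v1, x⟫ := lt_of_le_of_ne hr1p (Ne.symm hr1)
      have hr2p : 0 < ⟪v2, x⟫ := by
        rw [e2]
        rw [e1] at hr1pos
        exact wedge_sign' hc hc' hcc hp1 hr1pos
      rcases hx2 with ⟨_, hr2n'⟩ | ⟨hr1n', _⟩
      · linarith
      · linarith
  have hinter0 : μ (Dset u v1 ∩ Dset v1 v2) = 0 := measure_mono_null h_inter hN
  -- subset relations
  have h_sub : Dset u v2 ⊆ Dset u v1 ∪ Dset v1 v2 := by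
    intro x hx
    by_cases h : rsign ⟪u, x⟫ = rsign ⟪v1, x⟫
    · right
      rw [Dset, Set.mem_setOf_eq, ← h]
      exact hx
    · left; exact h
  have h_sup : Dset u v1 ∪ Dset v1 v2 ⊆ Dset u v2 ∪ N := by
    intro x hx
    by_cases hxN : x ∈ N
    · right; exact hxN
    left
    by_cases h02 : rsign ⟪u, x⟫ = rsign ⟪v2, x⟫
    · exfalso
      rcases hx with h01 | h12
      · have h12' : rsign ⟪v1, x⟫ ≠ rsign ⟪v2, x⟫ := by
          intro h; exact h01 (h02.trans h.symm)
        exact hxN (h_inter ⟨h01, h12'⟩)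
      · have h01' : rsign ⟪u, x⟫ ≠ rsign ⟪v1, x⟫ := by
          intro h; exact h12 (h.symm.trans h02)
        exact hxN (h_inter ⟨h01', h12⟩)
    · exact h02
  -- measure computation
  have m1 := Dset_mble u v1
  have m12 := Dset_mble v1 v2
  have m2 := Dset_mble u v2
  apply le_antisymm
  · calc μ (Dset u v2) ≤ μ (Dset u v1 ∪ Dset v1 v2) := measure_mono h_sub
      _ ≤ μ (Dset u v1) + μ (Dset v1 v2) := measure_union_le _ _
  · calc μ (Dset u v1) + μ (Dset v1 v2)
        = μ (Dset u v1 ∪ Dset v1 v2) := (measure_union₀ m12.nullMeasurableSet hinter0).symm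
      _ ≤ μ (Dset u v2 ∪ N) := measure_mono h_sup
      _ ≤ μ (Dset u v2) + μ N := measure_union_le _ _
      _ = μ (Dset u v2) := by rw [hN, add_zero]

end PartC
open MeasureTheory
open scoped RealInnerProductSpace

lemma perp_mble {d : ℕ} (b : EuclideanSpace ℝ (Fin d)) :
    MeasurableSet {x : EuclideanSpace ℝ (Fin d) | ⟪b, x⟫ = (0:ℝ)} :=
  (isClosed_eq (continuous_const.inner continuous_id) continuous_const).measurableSet

set_option maxHeartbeats 1000000 in
lemma uniform_wedge {d : ℕ} {μ : Measure (EuclideanSpace ℝ (Fin d))}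
    (hμ : IsUniformOnSphere μ) {u v : EuclideanSpace ℝ (Fin d)}
    (hu : ‖u‖ = 1) (hv : ‖v‖ = 1) :
    (μ (Dset v u)).toReal = Real.arccos ⟪v, u⟫ / Real.pi := by
  haveI : IsProbabilityMeasure μ := hμ.1
  have hpi : 0 < Real.pi := Real.pi_pos
  have hu0 : u ≠ 0 := by intro h; rw [h, norm_zero] at hu; norm_num at hu
  have habs : |⟪v, u⟫| ≤ 1 := by
    have h := abs_real_inner_le_norm v u
    rwa [hu, hv, one_mul] at h
  have huu : ⟪u, u⟫ = (1:ℝ) := by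
    rw [real_inner_self_eq_norm_mul_norm, hu]; norm_num
  have hvv : ⟪v, v⟫ = (1:ℝ) := by
    rw [real_inner_self_eq_norm_mul_norm, hv]; norm_num
  -- measure of the complement of a hyperplane
  have hDneg : (μ (Dset u (-u))).toReal = 1 := by
    rw [Dset_neg]
    have hcompl : {x : EuclideanSpace ℝ (Fin d) | ⟪u, x⟫ ≠ (0:ℝ)}
        = {x : EuclideanSpace ℝ (Fin d) | ⟪u, x⟫ = (0:ℝ)}ᶜ := rfl
    rw [hcompl, prob_compl_eq_one_sub (perp_mble u), hμ.null_perp hu0]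
    simp
  by_cases h1 : ⟪v, u⟫ = 1
  · have hvu : v = u := by
      exact (inner_eq_one_iff_of_norm_eq_one (𝕜 := ℝ) hv hu).mp h1
    rw [h1, Real.arccos_one, hvu, Dset_self, measure_empty]
    simp
  by_cases h2 : ⟪v, u⟫ = -1
  · have hvu : v = -u := by
      have hnu : ‖-u‖ = 1 := by rw [norm_neg, hu]
      have h2' : ⟪v, -u⟫ = (1:ℝ) := by rw [inner_neg_right, h2]; norm_num
      exact (inner_eq_one_iff_of_norm_eq_one (𝕜 := ℝ) hv hnu).mp h2' 
    rw [h2, Real.arccos_neg_one, div_self (ne_of_gt hpi), hvu, ← Dset_symm u (-u)]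
    exact hDneg
  -- main case
  have hlt : ⟪v, u⟫ < 1 := lt_of_le_of_ne (le_of_abs_le habs) h1
  have hgt : -1 < ⟪v, u⟫ := lt_of_le_of_ne (neg_le_of_abs_le habs) (Ne.symm h2)
  set t : ℝ := ⟪v, u⟫ with htdef
  set θ : ℝ := Real.arccos t with hθdef
  have hθ0 : 0 < θ := Real.arccos_pos.mpr hlt
  have hθπ : θ < Real.pi :=
    lt_of_le_of_ne (Real.arccos_le_pi t) (fun h => (not_le.mpr hgt) (Real.arccos_eq_pi.mp h))
  have hθπ' : θ ≤ Real.pi := Real.arccos_le_pi t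
  have hcosθ : Real.cos θ = t := Real.cos_arccos (by linarith) (by linarith)
  have hsinθ : Real.sin θ = Real.sqrt (1 - t ^ 2) := Real.sin_arccos t
  have ht2 : 0 < 1 - t ^ 2 := by nlinarith
  -- orthonormal companion
  set w₀ : EuclideanSpace ℝ (Fin d) := v - t • u with hw₀def
  have huv : ⟪u, v⟫ = t := by rw [real_inner_comm]
  have hw₀inner : ⟪w₀, w₀⟫ = 1 - t ^ 2 := by
    rw [hw₀def]
    simp only [inner_sub_left, inner_sub_right, real_inner_smul_left, real_inner_smul_right,
      huu, hvv, huv]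
    ring
  have hw₀norm : ‖w₀‖ = Real.sqrt (1 - t ^ 2) := by
    rw [norm_eq_sqrt_real_inner, hw₀inner]
  have hsq0 : Real.sqrt (1 - t ^ 2) ≠ 0 := by
    rw [Ne, Real.sqrt_eq_zero (by linarith)]
    linarith
  set e : EuclideanSpace ℝ (Fin d) := ‖w₀‖⁻¹ • w₀ with hedef
  have he : ‖e‖ = 1 := by
    rw [hedef, norm_smul, norm_inv, norm_norm, hw₀norm, inv_mul_cancel₀ hsq0]
  have hue : ⟪u, e⟫ = (0:ℝ) := by
    rw [hedef, inner_smul_right, hw₀def, inner_sub_right, real_inner_smul_right, huu, huv]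
    ring
  have hv_eq : Real.cos θ • u + Real.sin θ • e = v := by
    rw [hcosθ, hsinθ, hedef, smul_smul, hw₀norm, mul_inv_cancel₀ hsq0, one_smul, hw₀def]
    abel
  -- the angle measure function
  set g : ℝ → ℝ := fun c => (μ (Dset u (Real.cos c • u + Real.sin c • e))).toReal with hgdef
  have g0 : g 0 = 0 := by
    have hz : Real.cos 0 • u + Real.sin 0 • e = u := by simp
    rw [hgdef]; simp only; rw [hz, Dset_self, measure_empty]; simp
  have gπ : g Real.pi = 1 := by
    have hz : Real.cos Real.pi • u + Real.sin Real.pi • e = -u := by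
      simp [Real.cos_pi, Real.sin_pi]
    rw [hgdef]; simp only; rw [hz]
    exact hDneg
  have gnn : ∀ c, 0 ≤ g c := fun c => ENNReal.toReal_nonneg
  have gadd : ∀ c c', 0 < c → 0 < c' → c + c' ≤ Real.pi → g (c + c') = g c + g c' := by
    intro c c' hc hc' hcc
    rw [hgdef]; simp only
    rw [wedge_additive hμ hu he hue hc hc' hcc]
    rw [ENNReal.toReal_add (measure_ne_top μ _) (measure_ne_top μ _)]
  have gmono : ∀ b c, 0 ≤ b → b ≤ c → c ≤ Real.pi → g b ≤ g c := by
    intro b c hb hbc hcπ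
    rcases eq_or_lt_of_le hb with hb0 | hb0
    · rw [← hb0, g0]; exact gnn c
    rcases eq_or_lt_of_le hbc with hbc0 | hbc0
    · rw [hbc0]
    have : c = b + (c - b) := by ring
    rw [this, gadd b (c - b) hb0 (by linarith) (by linarith)]
    have := gnn (c - b)
    linarith
  have gmul : ∀ (k : ℕ) (s : ℝ), 0 < s → (k : ℝ) * s ≤ Real.pi → g ((k : ℝ) * s) = k * g s := by
    intro k
    induction k with
    | zero => intro s hs _; simp [g0]
    | succ k ih =>
      intro s hs hks
      rcases Nat.eq_zero_or_pos k with hk0 | hk0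
      · subst hk0; simp
      have hkr : (0:ℝ) < k := by exact_mod_cast hk0
      have h1 : ((k:ℝ) + 1) * s = (k:ℝ) * s + s := by ring
      have hks' : ((k:ℝ) + 1) * s ≤ Real.pi := by push_cast at hks; linarith
      have hksle : (k:ℝ) * s ≤ Real.pi := by nlinarith
      push_cast
      rw [h1, gadd ((k:ℝ) * s) s (by positivity) hs (by linarith),
        ih s hs hksle]
      ring
  have gdiv : ∀ n : ℕ, 1 ≤ n → g (Real.pi / n) = 1 / n := by
    intro n hn
    have hnr : (0:ℝ) < n := by exact_mod_cast hn
    have hmul : (n:ℝ) * (Real.pi / n) = Real.pi := by field_simp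
    have := gmul n (Real.pi / n) (by positivity) (by rw [hmul])
    rw [hmul, gπ] at this
    field_simp
    linarith
  -- squeeze
  have key : ∀ n : ℕ, 1 ≤ n → |g θ - θ / Real.pi| ≤ 1 / n := by
    intro n hn
    have hnr : (0:ℝ) < n := by exact_mod_cast hn
    set k : ℕ := Nat.floor ((n:ℝ) * θ / Real.pi) with hkdef
    have hratnn : 0 ≤ (n:ℝ) * θ / Real.pi := by positivity
    have hk1 : (k:ℝ) ≤ (n:ℝ) * θ / Real.pi := Nat.floor_le hratnn
    have hk2 : (n:ℝ) * θ / Real.pi < (k:ℝ) + 1 := Nat.lt_floor_add_one _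
    have hkn : k + 1 ≤ n := by
      have : (n:ℝ) * θ / Real.pi < (n:ℝ) := by
        rw [div_lt_iff₀ hpi]
        exact mul_lt_mul_of_pos_left hθπ hnr
      have : k < n := Nat.floor_lt hratnn |>.mpr this
      omega
    have hknr : (k:ℝ) + 1 ≤ (n:ℝ) := by exact_mod_cast hkn
    -- real bounds
    have hk1' : (k:ℝ) * Real.pi ≤ (n:ℝ) * θ := (le_div_iff₀ hpi).mp hk1
    have hk2' : (n:ℝ) * θ < ((k:ℝ) + 1) * Real.pi := (div_lt_iff₀ hpi).mp hk2
    have hlow : (k:ℝ) * (Real.pi / n) ≤ θ := by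
      rw [mul_div_assoc', div_le_iff₀ hnr]
      linarith
    have hhigh : θ ≤ ((k:ℝ) + 1) * (Real.pi / n) := by
      rw [mul_div_assoc', le_div_iff₀ hnr]
      linarith
    have hcap : ((k:ℝ) + 1) * (Real.pi / n) ≤ Real.pi := by
      calc ((k:ℝ) + 1) * (Real.pi / n) ≤ (n:ℝ) * (Real.pi / n) :=
            mul_le_mul_of_nonneg_right hknr (by positivity)
        _ = Real.pi := by field_simp
    have hglow : g ((k:ℝ) * (Real.pi / n)) = (k : ℝ) / n := by
      rw [gmul k (Real.pi / n) (by positivity) (by linarith), gdiv n hn]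
      ring
    have hkk : ((k:ℝ) + 1) = ((k + 1 : ℕ) : ℝ) := by push_cast; ring
    have hghigh : g (((k:ℝ) + 1) * (Real.pi / n)) = ((k:ℝ) + 1) / n := by
      rw [hkk, gmul (k + 1) (Real.pi / n) (by positivity) (by rw [← hkk]; exact hcap),
        gdiv n hn]
      push_cast; ring
    have hgb1 : (k:ℝ) / n ≤ g θ := by
      rw [← hglow]
      exact gmono _ _ (by positivity) hlow hθπ'
    have hgb2 : g θ ≤ ((k:ℝ) + 1) / n := by
      rw [← hghigh]
      exact gmono _ _ (by linarith) hhigh hcap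
    have hθb1 : (k:ℝ) / n ≤ θ / Real.pi := by
      rw [div_le_div_iff₀ hnr hpi]
      linarith
    have hθb2 : θ / Real.pi ≤ ((k:ℝ) + 1) / n := by
      rw [div_le_div_iff₀ hpi hnr]
      linarith
    have hsplit : ((k:ℝ) + 1) / n = (k:ℝ) / n + 1 / n := by ring
    rw [abs_le]
    constructor
    · linarith
    · linarith
  have hgθ : g θ = θ / Real.pi := by
    by_contra hne
    have hxpos : 0 < |g θ - θ / Real.pi| := by
      rw [abs_pos, sub_ne_zero]
      exact hne
    obtain ⟨n, hn⟩ := exists_nat_gt (1 / |g θ - θ / Real.pi|)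
    have hn0 : 0 < n := by
      have h0 : (0:ℝ) < 1 / |g θ - θ / Real.pi| := by positivity
      exact_mod_cast lt_trans h0 hn
    have hnr : (0:ℝ) < n := by exact_mod_cast hn0
    have hk := key n hn0
    rw [div_lt_iff₀ hxpos] at hn
    rw [le_div_iff₀ hnr] at hk
    nlinarith
  -- conclude
  rw [Dset_symm v u, ← hv_eq]
  exact hgθ

lemma rsign_vals (t : ℝ) : rsign t = 1 ∨ rsign t = -1 := by
  unfold rsign; split <;> simp

lemma measurable_rsign : Measurable rsign := by
  unfold rsign
  exact Measurable.ite measurableSet_Ici measurable_const measurable_const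

lemma pm_logic {a b y : ℝ} (ha : a = 1 ∨ a = -1) (hb : b = 1 ∨ b = -1)
    (hy : y = 1 ∨ y = -1) (hab : a ≠ b) : (a ≠ y ↔ b = y) := by
  rcases ha with rfl | rfl <;> rcases hb with rfl | rfl <;> rcases hy with rfl | rfl <;>
    (revert hab; norm_num)

theorem stmt_8 {d : ℕ} (hd : 2 ≤ d) {Ω : Type*} [MeasurableSpace Ω]
    (P : Measure Ω) [IsProbabilityMeasure P]
    (X : Ω → EuclideanSpace ℝ (Fin d)) (Y : Ω → ℝ)
    (hX : Measurable X) (hY : Measurable Y)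
    (hunif : IsUniformOnSphere (P.map X))
    (hYval : ∀ᵐ ω ∂P, Y ω = 1 ∨ Y ω = -1)
    (u : EuclideanSpace ℝ (Fin d)) (hu : ‖u‖ = 1)
    (η : ℝ) (hη0 : 0 ≤ η) (hη : η < 1 / 2)
    -- η-bounded noise: for every (measurable) event `{X ∈ A}`, the probability of a
    -- flipped label within it is at most `η · P[X ∈ A]` (this is the integrated form of
    -- `P[Y ≠ sign(u·x) | X = x] ≤ η` for all `x`).
    (hnoise : ∀ A : Set (EuclideanSpace ℝ (Fin d)), MeasurableSet A →
      P {ω | Y ω ≠ rsign ⟪u, X ω⟫ ∧ X ω ∈ A} ≤ ENNReal.ofReal η * P {ω | X ω ∈ A})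
    (v : EuclideanSpace ℝ (Fin d)) (hv : ‖v‖ = 1) :
    (P {ω | rsign ⟪v, X ω⟫ ≠ Y ω}).toReal - (P {ω | rsign ⟪u, X ω⟫ ≠ Y ω}).toReal ≥
      (1 - 2 * η) * (Real.arccos ⟪v, u⟫ / Real.pi) := by
  classical
  set A : Set (EuclideanSpace ℝ (Fin d)) := Dset v u with hAdef
  have hAmble : MeasurableSet A := Dset_mble v u
  have hμA : ((P.map X) A).toReal = Real.arccos ⟪v, u⟫ / Real.pi :=
    uniform_wedge hunif hu hv
  set A' : Set Ω := X ⁻¹' A with hA'def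
  have hA'mble : MeasurableSet A' := hX hAmble
  have hPA' : (P A').toReal = Real.arccos ⟪v, u⟫ / Real.pi := by
    rw [← hμA, Measure.map_apply hX hAmble]
  -- the error events
  set Ev : Set Ω := {ω | rsign ⟪v, X ω⟫ ≠ Y ω} with hEvdef
  set Eu : Set Ω := {ω | rsign ⟪u, X ω⟫ ≠ Y ω} with hEudef
  have hmv : Measurable fun ω => rsign ⟪v, X ω⟫ :=
    measurable_rsign.comp ((continuous_const.inner continuous_id).measurable.comp hX)
  have hmu : Measurable fun ω => rsign ⟪u, X ω⟫ :=
    measurable_rsign.comp ((continuous_const.inner continuous_id).measurable.comp hX)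
  have hEvmble : MeasurableSet Ev := by
    have : Ev = {ω | (fun ω => rsign ⟪v, X ω⟫) ω = Y ω}ᶜ := by
      ext ω; simp [hEvdef]
    rw [this]
    exact (measurableSet_eq_fun hmv hY).compl
  have hEumble : MeasurableSet Eu := by
    have : Eu = {ω | (fun ω => rsign ⟪u, X ω⟫) ω = Y ω}ᶜ := by
      ext ω; simp [hEudef]
    rw [this]
    exact (measurableSet_eq_fun hmu hY).compl
  -- off the disagreement region the two events agree
  have I1 : Ev \ A' = Eu \ A' := by
    ext ω
    simp only [Set.mem_diff, hEvdef, hEudef, hA'def, Set.mem_preimage, hAdef, Dset,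
      Set.mem_setOf_eq]
    constructor
    · rintro ⟨h1, h2⟩
      exact ⟨by rw [← not_ne_iff.mp h2]; exact h1, h2⟩
    · rintro ⟨h1, h2⟩
      exact ⟨by rw [not_ne_iff.mp h2]; exact h1, h2⟩
  -- on the disagreement region, error of v = correctness of u (a.e.)
  have I2 : (Ev ∩ A' : Set Ω) =ᵐ[P] (A' \ Eu : Set Ω) := by
    filter_upwards [hYval] with ω hYω
    have hmemA : (ω ∈ A') = (X ω ∈ A) := rfl
    simp only [eq_iff_iff]
    constructor
    · rintro ⟨h1, h2⟩
      have hab : rsign ⟪v, X ω⟫ ≠ rsign ⟪u, X ω⟫ := h2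
      have := (pm_logic (rsign_vals _) (rsign_vals _) hYω hab).mp h1
      exact ⟨h2, by rw [hEudef, Set.mem_setOf_eq, not_ne_iff]; exact this⟩
    · rintro ⟨h1, h2⟩
      have hab : rsign ⟪v, X ω⟫ ≠ rsign ⟪u, X ω⟫ := h1
      rw [hEudef, Set.mem_setOf_eq, not_ne_iff] at h2
      exact ⟨(pm_logic (rsign_vals _) (rsign_vals _) hYω hab).mpr h2, h1⟩
  -- measure algebra, in real numbers
  have fin : ∀ s : Set Ω, P s ≠ ⊤ := fun s => measure_ne_top P s
  have e1 : (P Ev).toReal = (P (Ev ∩ A')).toReal + (P (Ev \ A')).toReal := by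
    rw [← ENNReal.toReal_add (fin _) (fin _), measure_inter_add_diff Ev hA'mble]
  have e2 : (P Eu).toReal = (P (Eu ∩ A')).toReal + (P (Eu \ A')).toReal := by
    rw [← ENNReal.toReal_add (fin _) (fin _), measure_inter_add_diff Eu hA'mble]
  have e3 : (P (Ev \ A')).toReal = (P (Eu \ A')).toReal := by rw [I1]
  have e4 : (P (Ev ∩ A')).toReal = (P A').toReal - (P (A' ∩ Eu)).toReal := by
    rw [measure_congr I2]
    have := measure_inter_add_diff A' hEumble (μ := P)
    have h5 : (P (A' ∩ Eu)).toReal + (P (A' \ Eu)).toReal = (P A').toReal := by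
      rw [← ENNReal.toReal_add (fin _) (fin _), this]
    linarith
  have e5 : (P (A' ∩ Eu)).toReal = (P (Eu ∩ A')).toReal := by rw [Set.inter_comm]
  -- noise bound
  have hnA := hnoise A hAmble
  have hsetid : {ω | Y ω ≠ rsign ⟪u, X ω⟫ ∧ X ω ∈ A} = Eu ∩ A' := by
    ext ω
    simp only [Set.mem_setOf_eq, Set.mem_inter_iff, hEudef, hA'def, Set.mem_preimage]
    exact and_congr_left fun _ => ne_comm
  have hsetid2 : {ω | X ω ∈ A} = A' := rfl
  rw [hsetid, hsetid2] at hnA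
  have hnoise_real : (P (Eu ∩ A')).toReal ≤ η * (P A').toReal := by
    have hrhs : (ENNReal.ofReal η * P A').toReal = η * (P A').toReal := by
      rw [ENNReal.toReal_mul, ENNReal.toReal_ofReal hη0]
    rw [← hrhs]
    exact ENNReal.toReal_mono (ENNReal.mul_ne_top ENNReal.ofReal_ne_top (fin _)) hnA
  -- finish
  have hm0 : 0 ≤ (P A').toReal := ENNReal.toReal_nonneg
  have goal_eq : (P Ev).toReal - (P Eu).toReal
      = (P A').toReal - 2 * (P (Eu ∩ A')).toReal := by linarith
  rw [hEvdef, hEudef] at goal_eq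
  rw [goal_eq, ← hPA']
  nlinarith [hnoise_real, hm0]
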